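/- With the notation of the finite-dimensional perturbation theorem: if y ∈ B₂ satisfies the solvability conditions xᵢ⁰*(y) = 0 for i = 1,…,n, then the unique solution x of (A − A₁)x = y satisfies A₁x = 0 (equivalently hᵢ*(x) = 0 for each i), and hence x solves Ax = y. -/

import Mathlib

open Submodule

noncomputable section

/-- Finite-dimensional perturbation theorem (solution part): if `y` satisfies the solvability
conditions `x⁰ᵢ*(y) = 0`, then the (unique) solution `x` of the perturbed equation
`(A − A₁)x = y` satisfies `hᵢ*(x) = 0` for each `i` (hence `A₁x = 0`), and solves `Ax = y`. -/
theorem finite_dim_perturbation_solution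
    {B₁ B₂ : Type*}
    [NormedAddCommGroup B₁] [NormedSpace ℝ B₁] [CompleteSpace B₁]
    [NormedAddCommGroup B₂] [NormedSpace ℝ B₂] [CompleteSpace B₂]
    (A : B₁ →L[ℝ] B₂) (n : ℕ)
    (x0 : Fin n → B₁) (xs : Fin n → (B₂ →L[ℝ] ℝ))
    (hx0li : LinearIndependent ℝ x0)
    (hker : LinearMap.ker (A : B₁ →ₗ[ℝ] B₂) = Submodule.span ℝ (Set.range x0))
    (hxsli : LinearIndependent ℝ xs)
    (hxsker : ∀ i, (xs i).comp A = 0)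
    (hxsspan : ∀ f : B₂ →L[ℝ] ℝ, f.comp A = 0 → f ∈ Submodule.span ℝ (Set.range xs))
    (hclosed : IsClosed (LinearMap.range (A : B₁ →ₗ[ℝ] B₂) : Set B₂))
    (hrange : LinearMap.range (A : B₁ →ₗ[ℝ] B₂) = ⨅ i : Fin n, LinearMap.ker (xs i : B₂ →ₗ[ℝ] ℝ))
    (hs : Fin n → (B₁ →L[ℝ] ℝ)) (h : Fin n → B₂)
    (hdet1 : Matrix.det (Matrix.of fun i j => (hs i) (x0 j)) ≠ 0)
    (hdet2 : Matrix.det (Matrix.of fun i j => (xs i) (h j)) ≠ 0)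
    (y : B₂) (hy : ∀ i, (xs i) y = 0)
    (x : B₁) (hx : A x - ∑ i, (hs i) x • h i = y) :
    (∀ i, (hs i) x = 0) ∧ (∑ i, (hs i) x • h i = 0) ∧ A x = y := by
  have hAx : ∀ j, (xs j) (A x) = 0 := fun j => by
    have h1 : ((xs j).comp A) x = (0 : B₁ →L[ℝ] ℝ) x := by rw [hxsker j]
    simpa using h1
  have hsum : ∀ j, ∑ i, (Matrix.of fun i j => (xs i) (h j)) j i * (hs i) x = 0 := by
    intro j
    have := congrArg (xs j) hx
    simp only [map_sub, map_sum, map_smul, hAx, hy, smul_eq_mul] at this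
    simpa [mul_comm] using this
  have hzero : (fun i => (hs i) x) = 0 :=
    Matrix.eq_zero_of_mulVec_eq_zero hdet2 (funext fun j => hsum j)
  have hz : ∀ i, (hs i) x = 0 := fun i => congrFun hzero i
  refine ⟨hz, ?_, ?_⟩
  · simp [hz]
  · have : A x - ∑ i, (hs i) x • h i = A x := by simp [hz]
    rw [this] at hx; exact hx
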